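/- arXiv:1110.1192 — 3 statements merged into one kernel-verified Lean document; each statement's English description precedes it below -/
import Mathlib

section
/- Let α : S¹ → ℝ be square-integrable with Fourier expansion α(θ) = ∑_{k≥0} [a_k cos kθ + b_k sin kθ]. Define for r > 1 the extension α(r,θ) = ∑_{k≥0} (K_k(√s r)/K_k(√s)) [a_k cos kθ + b_k sin kθ], where K_k is the modified Bessel function of the second kind and s > 0. Then the series converges absolutely for r > 3 and |α(r,θ)| ≤ C e^{−√s r / 4} ‖α‖_{L²(S¹)} for all r > 3, with C an absolute constant. -/
open Real MeasureTheory

/-- The modified Bessel function of the second kind of integer order `k`. -/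
noncomputable def besselK (k : ℕ) (t : ℝ) : ℝ :=
  ∫ τ in Set.Ioi (0 : ℝ), Real.exp (-t * Real.cosh τ) * Real.cosh (k * τ)

open Set


lemma sinh_le_cosh' (x : ℝ) : Real.sinh x ≤ Real.cosh x := by
  rw [Real.sinh_eq, Real.cosh_eq]
  have := Real.exp_pos (-x); linarith

lemma cosh_le_exp' {x : ℝ} (hx : 0 ≤ x) : Real.cosh x ≤ Real.exp x := by
  rw [Real.cosh_eq]
  have h1 : Real.exp (-x) ≤ Real.exp x := Real.exp_le_exp.2 (by linarith)
  linarith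

lemma sq_div_eight_le_cosh {x : ℝ} (hx : 0 ≤ x) : x ^ 2 / 8 ≤ Real.cosh x := by
  have h1 := Real.add_one_le_exp (x / 2)
  have h2 : Real.exp (x/2) ^ 2 = Real.exp x := by
    rw [← Real.exp_nat_mul]; ring_nf
  have h3 := Real.exp_pos (-x)
  rw [Real.cosh_eq]
  nlinarith [Real.exp_pos (x/2)]

lemma pointwise_bound (k : ℕ) {t τ : ℝ} (ht : 0 < t) (hτ : 0 ≤ τ) :
    Real.exp (-t * Real.cosh τ) * Real.cosh (k * τ) ≤
      Real.exp (2 * (k+1)^2 / t) * Real.exp (-τ) := by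
  have h1 : Real.cosh (k * τ) ≤ Real.exp (k * τ) :=
    cosh_le_exp' (by positivity)
  have h2 : Real.exp (-t * Real.cosh τ) ≤ Real.exp (-t * (τ^2/8)) := by
    apply Real.exp_le_exp.2
    have := sq_div_eight_le_cosh hτ
    nlinarith
  calc Real.exp (-t * Real.cosh τ) * Real.cosh (k * τ)
      ≤ Real.exp (-t * (τ^2/8)) * Real.exp (k * τ) := by
        apply mul_le_mul h2 h1 (Real.cosh_pos _).le (Real.exp_pos _).le
    _ = Real.exp (-t * (τ^2/8) + k * τ) := (Real.exp_add _ _).symm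
    _ ≤ Real.exp (2 * (k+1)^2 / t + -τ) := by
        apply Real.exp_le_exp.2
        have key : 0 ≤ t/8 * (τ - 4*(k+1)/t)^2 := by positivity
        have ht' : t ≠ 0 := ne_of_gt ht
        have expand : t/8 * (τ - 4*(k+1)/t)^2 = t*τ^2/8 - (k+1)*τ + 2*(k+1)^2/t := by
          field_simp; ring
        nlinarith
    _ = Real.exp (2 * (k+1)^2 / t) * Real.exp (-τ) := Real.exp_add _ _

lemma besselK_integrable (k : ℕ) {t : ℝ} (ht : 0 < t) :
    IntegrableOn (fun τ => Real.exp (-t * Real.cosh τ) * Real.cosh (k * τ)) (Set.Ioi 0) := by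
  have hg : IntegrableOn (fun τ => Real.exp (2 * (k+1)^2 / t) * Real.exp (-τ)) (Set.Ioi (0:ℝ)) := by
    apply Integrable.const_mul
    exact (by simpa using exp_neg_integrableOn_Ioi 0 (b := 1) one_pos : IntegrableOn (fun x : ℝ => Real.exp (-x)) (Set.Ioi 0))
  apply Integrable.mono hg
  · apply Continuous.aestronglyMeasurable
    continuity
  · filter_upwards [ae_restrict_mem measurableSet_Ioi] with τ hτ
    rw [Real.norm_eq_abs, Real.norm_eq_abs, abs_of_nonneg (by positivity), abs_of_nonneg (by positivity)]
    exact pointwise_bound k ht (le_of_lt hτ)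

lemma besselK_pos (k : ℕ) {t : ℝ} (ht : 0 < t) : 0 < besselK k t := by
  rw [besselK]
  rw [setIntegral_pos_iff_support_of_nonneg_ae _ (besselK_integrable k ht)]
  · have : Function.support (fun τ => Real.exp (-t * Real.cosh τ) * Real.cosh (k * τ)) = Set.univ := by
      ext τ; simp only [Function.mem_support, Set.mem_univ, iff_true]
      positivity
    rw [this, Set.univ_inter]
    simp [Real.volume_Ioi]
  · filter_upwards with τ; positivity

-- Inequality A: K_k(t*r) ≤ exp(-t*(r-1)) * K_k(t)
lemma besselK_ineqA (k : ℕ) {t r : ℝ} (ht : 0 < t) (hr : 1 < r) :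
    besselK k (t * r) ≤ Real.exp (-(t * (r - 1))) * besselK k t := by
  have htr : 0 < t * r := by positivity
  rw [besselK, besselK, ← integral_const_mul]
  apply setIntegral_mono_on (besselK_integrable k htr)
    ((besselK_integrable k ht).const_mul _) measurableSet_Ioi
  intro τ hτ
  have h1 : 1 ≤ Real.cosh τ := Real.one_le_cosh τ
  have : Real.exp (-(t*r) * Real.cosh τ) ≤ Real.exp (-(t*(r-1))) * Real.exp (-t * Real.cosh τ) := by
    rw [← Real.exp_add]
    apply Real.exp_le_exp.2
    nlinarith [mul_le_mul_of_nonneg_left h1 (show (0:ℝ) ≤ t*(r-1) by nlinarith)]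
  calc Real.exp (-(t*r) * Real.cosh τ) * Real.cosh (k * τ)
      ≤ (Real.exp (-(t*(r-1))) * Real.exp (-t * Real.cosh τ)) * Real.cosh (k * τ) :=
        mul_le_mul_of_nonneg_right this (Real.cosh_pos _).le
    _ = Real.exp (-(t*(r-1))) * (Real.exp (-t * Real.cosh τ) * Real.cosh (k * τ)) := by ring

-- Inequality B: cosh(k * log r) * K_k(t*r) ≤ K_k(t)
lemma besselK_ineqB (k : ℕ) {t r : ℝ} (ht : 0 < t) (hr : 1 < r) :
    Real.cosh (k * Real.log r) * besselK k (t * r) ≤ besselK k t := by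
  set L := Real.log r with hL
  have hL0 : 0 < L := Real.log_pos hr
  have hr0 : 0 < r := by linarith
  have htr : 0 < t * r := by positivity
  set f : ℝ → ℝ := fun u => Real.exp (-t * Real.cosh u) * Real.cosh (k * u) with hf
  -- shift: ∫ u in Ioi L, f u = ∫ τ in Ioi 0, f (τ + L)
  have hshift : ∫ u in Set.Ioi L, f u = ∫ τ in Set.Ioi (0:ℝ), f (τ + L) := by
    have h1 := (measurePreserving_add_right volume L).setIntegral_image_emb
      (measurableEmbedding_addRight L) f (Set.Ioi 0)
    rw [← h1, Set.image_add_const_Ioi, zero_add]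
  have hintL : IntegrableOn f (Set.Ioi L) := (besselK_integrable k ht).mono_set
      (Set.Ioi_subset_Ioi hL0.le)
  have hint_shift : IntegrableOn (fun τ => f (τ + L)) (Set.Ioi 0) := by
    have h2 := ((measurePreserving_add_right volume L).integrableOn_image
      (measurableEmbedding_addRight L) (f := f) (s := Set.Ioi (0:ℝ))).1
    rw [Set.image_add_const_Ioi, zero_add] at h2
    exact h2 hintL
  -- pointwise: cosh(kL) * exp(-(t*r) cosh τ) * cosh(kτ) ≤ f (τ + L) for τ ≥ 0
  have hpt : ∀ τ ∈ Set.Ioi (0:ℝ),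
      Real.cosh (k * L) * (Real.exp (-(t*r) * Real.cosh τ) * Real.cosh (k * τ)) ≤ f (τ + L) := by
    intro τ hτ
    have hτ0 : (0:ℝ) ≤ τ := le_of_lt hτ
    have hcosh_shift : Real.cosh (τ + L) ≤ r * Real.cosh τ := by
      rw [Real.cosh_add]
      have h1 : Real.sinh τ ≤ Real.cosh τ := sinh_le_cosh' τ
      have h2 : 0 ≤ Real.sinh L := Real.sinh_nonneg_iff.2 hL0.le
      have h3 : Real.cosh L + Real.sinh L = r := by
        rw [Real.cosh_add_sinh, hL, Real.exp_log hr0]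
      nlinarith [Real.cosh_pos τ]
    have he : Real.exp (-(t*r) * Real.cosh τ) ≤ Real.exp (-t * Real.cosh (τ + L)) := by
      apply Real.exp_le_exp.2; nlinarith
    have hc : Real.cosh (k*τ) * Real.cosh (k*L) ≤ Real.cosh (k * (τ + L)) := by
      have : (k:ℝ) * (τ + L) = k*τ + k*L := by ring
      rw [this, Real.cosh_add]
      have h4 : 0 ≤ Real.sinh (k*τ) := Real.sinh_nonneg_iff.2 (by positivity)
      have h5 : 0 ≤ Real.sinh (k*L) := Real.sinh_nonneg_iff.2 (by positivity)
      nlinarith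
    calc Real.cosh (k * L) * (Real.exp (-(t*r) * Real.cosh τ) * Real.cosh (k * τ))
        ≤ Real.cosh (k * L) * (Real.exp (-t * Real.cosh (τ+L)) * Real.cosh (k * τ)) := by
          apply mul_le_mul_of_nonneg_left _ (Real.cosh_pos _).le
          exact mul_le_mul_of_nonneg_right he (Real.cosh_pos _).le
      _ = Real.exp (-t * Real.cosh (τ+L)) * (Real.cosh (k*τ) * Real.cosh (k*L)) := by ring
      _ ≤ Real.exp (-t * Real.cosh (τ+L)) * Real.cosh (k * (τ+L)) :=
          mul_le_mul_of_nonneg_left hc (Real.exp_pos _).le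
  calc Real.cosh (k * L) * besselK k (t * r)
      = ∫ τ in Set.Ioi (0:ℝ), Real.cosh (k*L) * (Real.exp (-(t*r) * Real.cosh τ) * Real.cosh (k * τ)) := by
        rw [besselK, integral_const_mul]
    _ ≤ ∫ τ in Set.Ioi (0:ℝ), f (τ + L) := by
        apply setIntegral_mono_on ((besselK_integrable k htr).const_mul _) hint_shift
          measurableSet_Ioi hpt
    _ = ∫ u in Set.Ioi L, f u := hshift.symm
    _ ≤ besselK k t := by
        rw [besselK]
        apply setIntegral_mono_set (besselK_integrable k ht)
        · filter_upwards with τ; positivity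
        · exact HasSubset.Subset.eventuallyLE (Set.Ioi_subset_Ioi hL0.le)

/-- Exterior exponential decay for solutions of `-Δu + s u = 0` outside the unit disk,
expressed through the Fourier coefficients `a`, `b` of the boundary data. -/
theorem exterior_decay :
    ∃ C : ℝ, 0 < C ∧
      ∀ (s : ℝ), 0 < s → ∀ (a b : ℕ → ℝ),
        Summable (fun k => a k ^ 2 + b k ^ 2) →
        ∀ (r : ℝ), 3 < r → ∀ θ : ℝ,
          Summable (fun k : ℕ =>
            |besselK k (Real.sqrt s * r) / besselK k (Real.sqrt s) *
              (a k * Real.cos (k * θ) + b k * Real.sin (k * θ))|) ∧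
          |∑' k : ℕ, besselK k (Real.sqrt s * r) / besselK k (Real.sqrt s) *
              (a k * Real.cos (k * θ) + b k * Real.sin (k * θ))| ≤
            C * Real.exp (-Real.sqrt s * r / 4) *
              (∑' k : ℕ, (a k ^ 2 + b k ^ 2)) ^ ((1 : ℝ) / 2) := by
  refine ⟨2, two_pos, fun s hs a b hab r hr θ => ?_⟩
  set t := Real.sqrt s with htdef
  have ht : 0 < t := Real.sqrt_pos.2 hs
  have hr1 : 1 < r := by linarith
  set Q : ℕ → ℝ := fun k => besselK k (t * r) / besselK k t with hQdef
  set g : ℕ → ℝ := fun k => |a k * Real.cos (k * θ) + b k * Real.sin (k * θ)| with hgdef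
  have hKpos : ∀ k, 0 < besselK k t := fun k => besselK_pos k ht
  have hKrpos : ∀ k, 0 < besselK k (t * r) := fun k => besselK_pos k (by positivity)
  have hQ0 : ∀ k, 0 ≤ Q k := fun k => le_of_lt (div_pos (hKrpos k) (hKpos k))
  have hQA : ∀ k, Q k ≤ Real.exp (-(t * (r - 1))) := by
    intro k
    rw [hQdef, div_le_iff₀ (hKpos k)]
    exact besselK_ineqA k ht hr1
  have hQB : ∀ k, Q k ≤ 2 * (1/3 : ℝ) ^ k := by
    intro k
    have hB := besselK_ineqB k ht hr1
    have hcosh : (3:ℝ)^k / 2 ≤ Real.cosh (k * Real.log r) := by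
      have h1 : Real.exp (k * Real.log r) = r ^ k := by
        rw [mul_comm, Real.exp_mul, Real.exp_log (by linarith), Real.rpow_natCast]
      have h2 : (3:ℝ)^k ≤ r^k := pow_le_pow_left₀ (by norm_num) (le_of_lt hr) k
      rw [Real.cosh_eq, h1]
      have := Real.exp_pos (-(k * Real.log r))
      nlinarith
    have h3 : (0:ℝ) < (3:ℝ)^k / 2 := by positivity
    have h4 : ((3:ℝ)^k / 2) * Q k ≤ 1 := by
      calc ((3:ℝ)^k / 2) * Q k ≤ Real.cosh (k * Real.log r) * Q k :=
            mul_le_mul_of_nonneg_right hcosh (hQ0 k)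
        _ ≤ 1 := by
            show Real.cosh (k * Real.log r) * (besselK k (t*r) / besselK k t) ≤ 1
            rw [← mul_div_assoc, div_le_one (hKpos k)]
            exact hB
    have h5 : Q k ≤ 2 / (3:ℝ)^k := by
      rw [le_div_iff₀ (by positivity)]
      nlinarith
    calc Q k ≤ 2 / (3:ℝ)^k := h5
      _ = 2 * (1/3:ℝ)^k := by rw [div_pow, one_pow]; ring
  have hg2 : ∀ k, g k ^ 2 ≤ a k ^ 2 + b k ^ 2 := by
    intro k
    rw [hgdef, sq_abs]
    nlinarith [Real.sin_sq_add_cos_sq (k*θ), sq_nonneg (a k * Real.sin (k*θ) - b k * Real.cos (k*θ))]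
  set B := ∑' k : ℕ, (a k ^ 2 + b k ^ 2) with hBdef
  have hB0 : 0 ≤ B := tsum_nonneg (fun k => by positivity)
  have hgB : ∀ k, g k ≤ Real.sqrt B := by
    intro k
    have h1 : a k ^ 2 + b k ^ 2 ≤ B := hab.le_tsum k (fun j _ => by positivity)
    calc g k = Real.sqrt (g k ^ 2) := (Real.sqrt_sq (abs_nonneg _)).symm
      _ ≤ Real.sqrt B := Real.sqrt_le_sqrt (le_trans (hg2 k) h1)
  -- the summand of the statement equals Q k * g k
  have hsummand : ∀ k : ℕ,
      |besselK k (Real.sqrt s * r) / besselK k (Real.sqrt s) *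
        (a k * Real.cos (k * θ) + b k * Real.sin (k * θ))| = Q k * g k := by
    intro k
    rw [abs_mul, abs_of_nonneg (hQ0 k)]
  have hsummable : Summable (fun k : ℕ => Q k * g k) := by
    apply Summable.of_nonneg_of_le (fun k => mul_nonneg (hQ0 k) (abs_nonneg _))
      (fun k => ?_) (((summable_geometric_of_lt_one (by norm_num) (by norm_num : (1/3:ℝ) < 1)).mul_left
        (2 * Real.sqrt B)))
    calc Q k * g k ≤ (2 * (1/3:ℝ)^k) * Real.sqrt B :=
          mul_le_mul (hQB k) (hgB k) (abs_nonneg _) (by positivity)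
      _ = 2 * Real.sqrt B * (1/3:ℝ)^k := by ring
  constructor
  · simpa only [htdef, hsummand] using hsummable
  · have habs : |∑' k : ℕ, besselK k (Real.sqrt s * r) / besselK k (Real.sqrt s) *
        (a k * Real.cos (k * θ) + b k * Real.sin (k * θ))| ≤ ∑' k : ℕ, Q k * g k := by
      have h1 := norm_tsum_le_tsum_norm (f := fun k : ℕ =>
        besselK k (Real.sqrt s * r) / besselK k (Real.sqrt s) *
          (a k * Real.cos (k * θ) + b k * Real.sin (k * θ))) ?_
      · rw [Real.norm_eq_abs] at h1
        refine h1.trans (le_of_eq (tsum_congr fun k => ?_))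
        rw [Real.norm_eq_abs, hsummand]
      · simp only [Real.norm_eq_abs]
        simpa only [hsummand] using hsummable
    refine habs.trans ?_
    have hX0 : (0:ℝ) ≤ 2 * Real.exp (-t * r / 4) * Real.sqrt B := by positivity
    have hfin : ∑' k : ℕ, Q k * g k ≤ 2 * Real.exp (-t * r / 4) * Real.sqrt B := by
      apply Summable.tsum_le_of_sum_le hsummable
      intro F
      set S := ∑ k ∈ F, Q k * g k with hSdef
      have hS0 : 0 ≤ S := Finset.sum_nonneg (fun k _ => mul_nonneg (hQ0 k) (abs_nonneg _))
      have hCS := Finset.sum_mul_sq_le_sq_mul_sq F Q g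
      have hQsq : ∑ k ∈ F, Q k ^ 2 ≤ 3 * Real.exp (-(t * (r-1))) := by
        have h1 : ∀ k ∈ F, Q k ^ 2 ≤ Real.exp (-(t * (r-1))) * (2 * (1/3:ℝ)^k) := by
          intro k _
          rw [sq]
          exact mul_le_mul (hQA k) (hQB k) (hQ0 k) (Real.exp_pos _).le
        calc ∑ k ∈ F, Q k ^ 2 ≤ ∑ k ∈ F, Real.exp (-(t * (r-1))) * (2 * (1/3:ℝ)^k) :=
              Finset.sum_le_sum h1
          _ = Real.exp (-(t * (r-1))) * (2 * ∑ k ∈ F, (1/3:ℝ)^k) := by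
              simp only [Finset.mul_sum]
          _ ≤ Real.exp (-(t * (r-1))) * (2 * (3/2)) := by
              apply mul_le_mul_of_nonneg_left _ (Real.exp_pos _).le
              have := Summable.sum_le_tsum F (fun k _ => by positivity)
                (summable_geometric_of_lt_one (by norm_num) (by norm_num : (1/3:ℝ) < 1))
              rw [tsum_geometric_of_lt_one (by norm_num) (by norm_num)] at this
              norm_num at this ⊢
              linarith
          _ = 3 * Real.exp (-(t * (r-1))) := by ring
      have hgsq : ∑ k ∈ F, g k ^ 2 ≤ B := by
        calc ∑ k ∈ F, g k ^ 2 ≤ ∑ k ∈ F, (a k ^2 + b k ^2) := Finset.sum_le_sum (fun k _ => hg2 k)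
          _ ≤ B := Summable.sum_le_tsum F (fun k _ => by positivity) hab
      have hSsq : S ^ 2 ≤ 3 * Real.exp (-(t * (r-1))) * B := by
        calc S ^ 2 ≤ (∑ k ∈ F, Q k ^ 2) * (∑ k ∈ F, g k ^ 2) := hCS
          _ ≤ (3 * Real.exp (-(t * (r-1)))) * B := by
              apply mul_le_mul hQsq hgsq (Finset.sum_nonneg (fun k _ => sq_nonneg _)) (by positivity)
      have hexp : 3 * Real.exp (-(t * (r-1))) ≤ 4 * Real.exp (-t * r / 2) := by
        have h1 : Real.exp (-(t * (r-1))) = Real.exp (-t * r / 2) * Real.exp (-(t * (r/2 - 1))) := by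
          rw [← Real.exp_add]; ring_nf
        have h2 : Real.exp (-(t * (r/2 - 1))) ≤ 1 := by
          rw [Real.exp_le_one_iff]
          nlinarith
        nlinarith [Real.exp_pos (-t * r / 2)]
      have hXsq : (2 * Real.exp (-t * r / 4) * Real.sqrt B) ^ 2 = 4 * Real.exp (-t * r / 2) * B := by
        have he2 : Real.exp (-t*r/4) ^ 2 = Real.exp (-t*r/2) := by
          rw [sq, ← Real.exp_add]; congr 1; ring
        rw [mul_pow, mul_pow, Real.sq_sqrt hB0, he2]; norm_num
      have : S ^ 2 ≤ (2 * Real.exp (-t * r / 4) * Real.sqrt B) ^ 2 := by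
        rw [hXsq]
        calc S^2 ≤ 3 * Real.exp (-(t * (r-1))) * B := hSsq
          _ ≤ 4 * Real.exp (-t * r / 2) * B := mul_le_mul_of_nonneg_right hexp hB0
      calc S = Real.sqrt (S^2) := (Real.sqrt_sq hS0).symm
        _ ≤ Real.sqrt ((2 * Real.exp (-t * r / 4) * Real.sqrt B)^2) := Real.sqrt_le_sqrt this
        _ = 2 * Real.exp (-t * r / 4) * Real.sqrt B := Real.sqrt_sq hX0
    refine hfin.trans (le_of_eq ?_)
    rw [← Real.sqrt_eq_rpow]
end

section
/- For all 0 < x < 1, K₁(x)/K₀(x) ≤ 2/(x ln(e/x)), where K₀ and K₁ are the modified Bessel functions of the second kind of orders zero and one. -/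
open Real MeasureTheory Set Filter Topology

/-- The modified Bessel function of the second kind of order zero. -/
noncomputable def besselK0 (t : ℝ) : ℝ :=
  ∫ τ in Set.Ioi (0 : ℝ), Real.exp (-t * Real.cosh τ)

/-- The modified Bessel function of the second kind of order one. -/
noncomputable def besselK1 (t : ℝ) : ℝ :=
  ∫ τ in Set.Ioi (0 : ℝ), Real.exp (-t * Real.cosh τ) * Real.cosh τ

lemma le_cosh_of_pos {τ : ℝ} (h : 0 < τ) : τ ≤ Real.cosh τ := by
  have h1 : τ < Real.sinh τ := Real.self_lt_sinh_iff.mpr h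
  have h2 : Real.cosh τ - Real.sinh τ = Real.exp (-τ) := Real.cosh_sub_sinh τ
  nlinarith [Real.exp_pos (-τ)]

lemma u_exp_neg_le_one {u : ℝ} : u * Real.exp (-u) ≤ 1 := by
  have h1 : u + 1 ≤ Real.exp u := Real.add_one_le_exp u
  have h2 : Real.exp u * Real.exp (-u) = 1 := by rw [← Real.exp_add]; simp
  nlinarith [Real.exp_pos (-u), Real.exp_pos u]

lemma int_exp_cosh {x : ℝ} (hx : 0 < x) :
    IntegrableOn (fun τ => Real.exp (-x * Real.cosh τ)) (Ioi (0:ℝ)) := by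
  refine Integrable.mono (exp_neg_integrableOn_Ioi 0 hx) ?_ ?_
  · exact (Continuous.aestronglyMeasurable (by continuity))
  · refine (ae_restrict_iff' measurableSet_Ioi).2 (Filter.Eventually.of_forall fun τ hτ => ?_)
    simp only [Real.norm_eq_abs, Real.abs_exp]
    have := le_cosh_of_pos hτ
    exact Real.exp_le_exp.mpr (by nlinarith)

lemma int_exp_cosh_mul {x : ℝ} (hx : 0 < x) :
    IntegrableOn (fun τ => Real.exp (-x * Real.cosh τ) * Real.cosh τ) (Ioi (0:ℝ)) := by
  have hx2 : 0 < x/2 := by linarith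
  refine Integrable.mono ((exp_neg_integrableOn_Ioi 0 hx2).const_mul (2/x)) ?_ ?_
  · exact (Continuous.aestronglyMeasurable (by continuity))
  · refine (ae_restrict_iff' measurableSet_Ioi).2 (Filter.Eventually.of_forall fun τ hτ => ?_)
    simp only [Real.norm_eq_abs, abs_mul, Real.abs_exp]
    have hc : (0:ℝ) < Real.cosh τ := Real.cosh_pos τ
    rw [abs_of_pos hc]
    have key : x/2 * Real.cosh τ * Real.exp (-(x/2 * Real.cosh τ)) ≤ 1 := u_exp_neg_le_one
    have hsplit : Real.exp (-x * Real.cosh τ)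
        = Real.exp (-(x/2 * Real.cosh τ)) * Real.exp (-(x/2) * Real.cosh τ) := by
      rw [← Real.exp_add]; ring_nf
    have hmono : Real.exp (-(x/2) * Real.cosh τ) ≤ Real.exp (-(x/2) * τ) := by
      have := le_cosh_of_pos hτ
      exact Real.exp_le_exp.mpr (by nlinarith)
    have h2 : Real.exp (-(x/2 * Real.cosh τ)) * Real.cosh τ ≤ 2/x := by
      rw [show (2:ℝ)/x = (2/x) * 1 by ring]
      have : Real.exp (-(x/2 * Real.cosh τ)) * Real.cosh τ
          = (2/x) * (x/2 * Real.cosh τ * Real.exp (-(x/2 * Real.cosh τ))) := by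
        field_simp
      rw [this]
      exact mul_le_mul_of_nonneg_left key (by positivity)
    calc Real.exp (-x * Real.cosh τ) * Real.cosh τ
        = (Real.exp (-(x/2 * Real.cosh τ)) * Real.cosh τ) * Real.exp (-(x/2) * Real.cosh τ) := by
          rw [hsplit]; ring
      _ ≤ (2/x) * Real.exp (-(x/2) * τ) := by
          apply mul_le_mul h2 hmono (Real.exp_pos _).le (by positivity)
      _ = |2/x| * Real.exp (-(x/2) * τ) := by
          rw [abs_of_pos (show (0:ℝ) < 2/x by positivity)]

lemma int_exp_cosh_sinh {x : ℝ} (hx : 0 < x) :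
    IntegrableOn (fun τ => Real.exp (-x * Real.cosh τ) * Real.sinh τ) (Ioi (0:ℝ)) := by
  refine Integrable.mono (int_exp_cosh_mul hx) ?_ ?_
  · exact (Continuous.aestronglyMeasurable (by continuity))
  · refine (ae_restrict_iff' measurableSet_Ioi).2 (Filter.Eventually.of_forall fun τ hτ => ?_)
    simp only [Real.norm_eq_abs, abs_mul, Real.abs_exp]
    have hc : (0:ℝ) < Real.cosh τ := Real.cosh_pos τ
    have hτ' : (0:ℝ) < τ := hτ
    have hs : (0:ℝ) ≤ Real.sinh τ := by
      have := Real.self_lt_sinh_iff.mpr hτ'; linarith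
    rw [abs_of_pos hc, abs_of_nonneg hs]
    have : Real.sinh τ ≤ Real.cosh τ := by
      have := Real.cosh_sub_sinh τ; nlinarith [Real.exp_pos (-τ)]
    exact mul_le_mul_of_nonneg_left this (Real.exp_pos _).le

lemma le_cosh_of_pos' {τ : ℝ} (h : 0 < τ) : τ ≤ Real.cosh τ := by
  have h1 : τ < Real.sinh τ := Real.self_lt_sinh_iff.mpr h
  have h2 : Real.cosh τ - Real.sinh τ = Real.exp (-τ) := Real.cosh_sub_sinh τ
  nlinarith [Real.exp_pos (-τ)]

lemma tendsto_cosh_atTop' : Tendsto Real.cosh atTop atTop :=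
  tendsto_atTop_mono' atTop
    (by filter_upwards [eventually_gt_atTop (0:ℝ)] with τ hτ using le_cosh_of_pos' hτ)
    tendsto_id

lemma tendsto_sinh_atTop' : Tendsto Real.sinh atTop atTop :=
  tendsto_atTop_mono' atTop
    (by filter_upwards [eventually_gt_atTop (0:ℝ)] with τ hτ using (Real.self_lt_sinh_iff.mpr hτ).le)
    tendsto_id

lemma integral_exp_cosh_sinh {x : ℝ} (hx : 0 < x) :
    ∫ τ in Ioi (0:ℝ), Real.exp (-x * Real.cosh τ) * Real.sinh τ = Real.exp (-x) / x := by
  have hderiv : ∀ τ ∈ Ici (0:ℝ), HasDerivAt (fun τ => -(Real.exp (-x * Real.cosh τ) / x))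
      (Real.exp (-x * Real.cosh τ) * Real.sinh τ) τ := by
    intro τ _
    have h1 : HasDerivAt (fun τ : ℝ => -x * Real.cosh τ) (-x * Real.sinh τ) τ :=
      (Real.hasDerivAt_cosh τ).const_mul (-x)
    have h2 : HasDerivAt (fun τ => -(Real.exp (-x * Real.cosh τ) / x))
        (-(Real.exp (-x * Real.cosh τ) * (-x * Real.sinh τ) / x)) τ := (h1.exp.div_const x).neg
    convert h2 using 1
    rw [show -(Real.exp (-x * Real.cosh τ) * (-x * Real.sinh τ) / x)
        = (x * (Real.exp (-x * Real.cosh τ) * Real.sinh τ)) / x by ring,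
      mul_div_cancel_left₀ _ hx.ne']
  have hpos : ∀ τ ∈ Ioi (0:ℝ), 0 ≤ Real.exp (-x * Real.cosh τ) * Real.sinh τ := by
    intro τ hτ
    have hτ' : (0:ℝ) < τ := hτ
    have : (0:ℝ) < Real.sinh τ := by
      have := Real.self_lt_sinh_iff.mpr hτ'; linarith
    positivity
  have htend : Tendsto (fun τ => -(Real.exp (-x * Real.cosh τ) / x)) atTop (𝓝 0) := by
    have h1 : Tendsto (fun τ : ℝ => -x * Real.cosh τ) atTop atBot :=
      tendsto_cosh_atTop'.const_mul_atTop_of_neg (by linarith)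
    have h2 : Tendsto (fun τ : ℝ => Real.exp (-x * Real.cosh τ)) atTop (𝓝 0) :=
      Real.tendsto_exp_atBot.comp h1
    simpa using (h2.div_const x).neg
  rw [integral_Ioi_of_hasDerivAt_of_nonneg' hderiv hpos htend]
  simp [Real.cosh_zero]

lemma exp_sinh_cosh_setup {x : ℝ} (hx : 0 < x) :
    (∀ τ ∈ Ici (0:ℝ), HasDerivAt (fun τ => -(Real.exp (-x * Real.sinh τ) / x))
      (Real.exp (-x * Real.sinh τ) * Real.cosh τ) τ) ∧
    (∀ τ ∈ Ioi (0:ℝ), 0 ≤ Real.exp (-x * Real.sinh τ) * Real.cosh τ) ∧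
    Tendsto (fun τ => -(Real.exp (-x * Real.sinh τ) / x)) atTop (𝓝 0) := by
  refine ⟨?_, ?_, ?_⟩
  · intro τ _
    have h1 : HasDerivAt (fun τ : ℝ => -x * Real.sinh τ) (-x * Real.cosh τ) τ :=
      (Real.hasDerivAt_sinh τ).const_mul (-x)
    have h2 : HasDerivAt (fun τ => -(Real.exp (-x * Real.sinh τ) / x))
        (-(Real.exp (-x * Real.sinh τ) * (-x * Real.cosh τ) / x)) τ := (h1.exp.div_const x).neg
    convert h2 using 1
    rw [show -(Real.exp (-x * Real.sinh τ) * (-x * Real.cosh τ) / x)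
        = (x * (Real.exp (-x * Real.sinh τ) * Real.cosh τ)) / x by ring,
      mul_div_cancel_left₀ _ hx.ne']
  · intro τ _
    positivity
  · have h1 : Tendsto (fun τ : ℝ => -x * Real.sinh τ) atTop atBot :=
      tendsto_sinh_atTop'.const_mul_atTop_of_neg (by linarith)
    have h2 : Tendsto (fun τ : ℝ => Real.exp (-x * Real.sinh τ)) atTop (𝓝 0) :=
      Real.tendsto_exp_atBot.comp h1
    simpa using (h2.div_const x).neg

lemma integral_exp_sinh_cosh {x : ℝ} (hx : 0 < x) :
    ∫ τ in Ioi (0:ℝ), Real.exp (-x * Real.sinh τ) * Real.cosh τ = 1 / x := by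
  obtain ⟨hderiv, hpos, htend⟩ := exp_sinh_cosh_setup hx
  rw [integral_Ioi_of_hasDerivAt_of_nonneg' hderiv hpos htend]
  simp [Real.sinh_zero]

lemma int_exp_sinh_cosh {x : ℝ} (hx : 0 < x) :
    IntegrableOn (fun τ => Real.exp (-x * Real.sinh τ) * Real.cosh τ) (Ioi (0:ℝ)) := by
  obtain ⟨hderiv, hpos, htend⟩ := exp_sinh_cosh_setup hx
  exact integrableOn_Ioi_deriv_of_nonneg' hderiv hpos htend

lemma integral_exp_neg_two : ∫ τ in Ioi (0:ℝ), Real.exp (-2 * τ) = 1/2 := by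
  have hderiv : ∀ τ ∈ Ici (0:ℝ), HasDerivAt (fun τ : ℝ => -(Real.exp (-2 * τ) / 2))
      (Real.exp (-2 * τ)) τ := by
    intro τ _
    have h1 : HasDerivAt (fun τ : ℝ => -2 * τ) (-2 : ℝ) τ := by
      simpa using (hasDerivAt_id τ).const_mul (-2 : ℝ)
    have h2 : HasDerivAt (fun τ : ℝ => -(Real.exp (-2 * τ) / 2))
        (-(Real.exp (-2 * τ) * (-2 : ℝ) / 2)) τ := (h1.exp.div_const 2).neg
    convert h2 using 1
    rw [show -(Real.exp (-2 * τ) * (-2 : ℝ) / 2) = (2 * Real.exp (-2 * τ)) / 2 by ring,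
      mul_div_cancel_left₀ _ (two_ne_zero)]
  have hpos : ∀ τ ∈ Ioi (0:ℝ), 0 ≤ Real.exp (-2 * τ) := fun τ _ => (Real.exp_pos _).le
  have htend : Tendsto (fun τ : ℝ => -(Real.exp (-2 * τ) / 2)) atTop (𝓝 0) := by
    have h1 : Tendsto (fun τ : ℝ => -2 * τ) atTop atBot :=
      (tendsto_id (α := ℝ)).const_mul_atTop_of_neg (by norm_num)
    have h2 : Tendsto (fun τ : ℝ => Real.exp (-2 * τ)) atTop (𝓝 0) :=
      Real.tendsto_exp_atBot.comp h1
    simpa using (h2.div_const 2).neg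
  rw [integral_Ioi_of_hasDerivAt_of_nonneg' hderiv hpos htend]
  norm_num

-- U1
lemma besselK1_le_inv {x : ℝ} (hx : 0 < x) : besselK1 x ≤ 1 / x := by
  rw [besselK1, ← integral_exp_sinh_cosh hx]
  refine setIntegral_mono_on (int_exp_cosh_mul hx) (int_exp_sinh_cosh hx) measurableSet_Ioi ?_
  intro τ _
  have h1 : Real.sinh τ ≤ Real.cosh τ := by
    have := Real.cosh_sub_sinh τ; nlinarith [Real.exp_pos (-τ)]
  exact mul_le_mul_of_nonneg_right (Real.exp_le_exp.mpr (by nlinarith)) (Real.cosh_pos τ).le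

-- U2
lemma besselK1_le_half {x : ℝ} (hx : 0 < x) :
    besselK1 x ≤ besselK0 x / 2 + Real.exp (-x) / x + Real.exp (-x) / 4 := by
  have key : besselK1 x ≤ ∫ τ in Ioi (0:ℝ),
      (Real.exp (-x * Real.cosh τ) * Real.sinh τ + Real.exp (-x * Real.cosh τ) * (1/2)
        + (Real.exp (-x) / 2) * Real.exp (-2 * τ)) := by
    rw [besselK1]
    refine setIntegral_mono_on (int_exp_cosh_mul hx) ?_ measurableSet_Ioi ?_
    · exact ((int_exp_cosh_sinh hx).add ((int_exp_cosh hx).mul_const (1/2))).add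
        (((exp_neg_integrableOn_Ioi 0 two_pos).const_mul (Real.exp (-x) / 2)))
    · intro τ hτ
      have hτ' : (0:ℝ) < τ := hτ
      set E := Real.exp (-x * Real.cosh τ) with hE
      have hEpos : 0 < E := Real.exp_pos _
      have hX : E ≤ Real.exp (-x) := by
        apply Real.exp_le_exp.mpr
        nlinarith [Real.one_le_cosh τ]
      have hcs : Real.cosh τ - Real.sinh τ = Real.exp (-τ) := Real.cosh_sub_sinh τ
      have he2 : Real.exp (-2*τ) = Real.exp (-τ) * Real.exp (-τ) := by
        rw [← Real.exp_add]; ring_nf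
      have hkey : Real.exp (-τ) ≤ 1/2 + Real.exp (-2*τ)/2 := by
        nlinarith [sq_nonneg (Real.exp (-τ) - 1)]
      have h1 : E * Real.exp (-τ) ≤ E * (1/2 + Real.exp (-2*τ)/2) :=
        mul_le_mul_of_nonneg_left hkey hEpos.le
      have h2 : E * (Real.exp (-2*τ)/2) ≤ (Real.exp (-x)/2) * Real.exp (-2*τ) := by
        have := mul_le_mul_of_nonneg_right hX (Real.exp_pos (-2*τ)).le
        nlinarith
      nlinarith [hEpos]
  rw [besselK0]
  have hsum : (∫ τ in Ioi (0:ℝ),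
      (Real.exp (-x * Real.cosh τ) * Real.sinh τ + Real.exp (-x * Real.cosh τ) * (1/2)
        + (Real.exp (-x) / 2) * Real.exp (-2 * τ)))
      = Real.exp (-x) / x + (∫ τ in Ioi (0:ℝ), Real.exp (-x * Real.cosh τ)) * (1/2)
        + (Real.exp (-x) / 2) * (1/2) := by
    have h1 : IntegrableOn (fun τ => Real.exp (-x * Real.cosh τ) * Real.sinh τ
        + Real.exp (-x * Real.cosh τ) * (1/2)) (Ioi (0:ℝ)) :=
      (int_exp_cosh_sinh hx).add ((int_exp_cosh hx).mul_const (1/2))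
    have h2 : IntegrableOn (fun τ : ℝ => (Real.exp (-x) / 2) * Real.exp (-2 * τ)) (Ioi (0:ℝ)) :=
      (exp_neg_integrableOn_Ioi 0 two_pos).const_mul (Real.exp (-x) / 2)
    rw [integral_add h1 h2,
      integral_add (int_exp_cosh_sinh hx) ((int_exp_cosh hx).mul_const (1/2)),
      integral_exp_cosh_sinh hx, MeasureTheory.integral_mul_const, MeasureTheory.integral_const_mul, integral_exp_neg_two]
  rw [hsum] at key
  linarith [key]

-- D1
lemma besselK0_lower_log {x : ℝ} (hx : 0 < x) (hx1 : x < 1) :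
    Real.log (2/x) - 1 + x^2/4 ≤ besselK0 x := by
  set T := Real.log (2/x) with hT
  have hTpos : 0 < T := Real.log_pos (by rw [lt_div_iff₀ hx]; linarith)
  have hstep1 : (∫ τ in Ioc (0:ℝ) T, Real.exp (-x * Real.cosh τ)) ≤ besselK0 x := by
    rw [besselK0]
    refine setIntegral_mono_set (int_exp_cosh hx) ?_ (Ioc_subset_Ioi_self.eventuallyLE)
    exact Eventually.of_forall fun τ => (Real.exp_pos _).le
  have hstep2 : (∫ τ in (0:ℝ)..T, (1 - x * Real.cosh τ)) ≤ ∫ τ in (0:ℝ)..T, Real.exp (-x * Real.cosh τ) := by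
    refine intervalIntegral.integral_mono_on hTpos.le ?_ ?_ ?_
    · exact (Continuous.intervalIntegrable (by continuity) _ _)
    · exact (Continuous.intervalIntegrable (by continuity) _ _)
    · intro τ _
      have := Real.add_one_le_exp (-x * Real.cosh τ)
      linarith
  have hstep3 : (∫ τ in (0:ℝ)..T, (1 - x * Real.cosh τ)) = T - x * Real.sinh T := by
    have hd : ∀ t ∈ uIcc (0:ℝ) T, HasDerivAt (fun τ => τ - x * Real.sinh τ) (1 - x * Real.cosh t) t := by
      intro t _
      exact (hasDerivAt_id t).sub ((Real.hasDerivAt_sinh t).const_mul x)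
    rw [intervalIntegral.integral_eq_sub_of_hasDerivAt hd
      (Continuous.intervalIntegrable (by continuity) _ _)]
    simp [Real.sinh_zero]
  have hsinh : Real.sinh T = 1/x - x/4 := by
    rw [hT, Real.sinh_eq, Real.exp_log (by positivity), Real.exp_neg, Real.exp_log (by positivity)]
    field_simp
    ring
  have hioc : (∫ τ in (0:ℝ)..T, Real.exp (-x * Real.cosh τ))
      = ∫ τ in Ioc (0:ℝ) T, Real.exp (-x * Real.cosh τ) :=
    intervalIntegral.integral_of_le hTpos.le
  have : T - x * Real.sinh T = T - 1 + x^2/4 := by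
    rw [hsinh]; field_simp; ring
  linarith [hstep1, hstep2, hstep3 ▸ hstep2, hioc ▸ hstep2]

-- D2
lemma besselK0_lower_sqrt {x : ℝ} (hx : 0 < x) :
    Real.exp (-x) * Real.sqrt (π / (2*x + 1/2)) ≤ besselK0 x := by
  have himg : (fun u => 2 * Real.arsinh u) '' (Ioi 0) = Ioi (0:ℝ) := by
    ext y
    constructor
    · rintro ⟨u, hu, rfl⟩
      have hu' : (0:ℝ) < u := hu
      have : 0 < Real.arsinh u := Real.arsinh_pos_iff.mpr hu'
      simp only [mem_Ioi]
      linarith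
    · intro hy
      have hy' : (0:ℝ) < y := hy
      refine ⟨Real.sinh (y/2), mem_Ioi.mpr (Real.sinh_pos_iff.mpr (by linarith)), ?_⟩
      show 2 * Real.arsinh (Real.sinh (y/2)) = y
      rw [Real.arsinh_sinh]; ring
  have hCoV : besselK0 x = ∫ u in Ioi (0:ℝ),
      |2 * (Real.sqrt (1 + u^2))⁻¹| * Real.exp (-x * Real.cosh (2 * Real.arsinh u)) := by
    rw [besselK0]
    conv_lhs => rw [← himg,
      integral_image_eq_integral_abs_deriv_smul measurableSet_Ioi
        (fun u _ => ((Real.hasDerivAt_arsinh u).const_mul 2).hasDerivWithinAt)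
        (fun a _ b _ h => Real.arsinh_injective (by
          have h' : 2 * Real.arsinh a = 2 * Real.arsinh b := h
          linarith))]
    simp only [smul_eq_mul]
  have hCoV2 : besselK0 x = ∫ u in Ioi (0:ℝ),
      2 * (Real.sqrt (1 + u^2))⁻¹ * Real.exp (-x * (1 + 2*u^2)) := by
    rw [hCoV]
    refine setIntegral_congr_fun measurableSet_Ioi fun u _ => ?_
    have hsq : (0:ℝ) < Real.sqrt (1 + u^2) := Real.sqrt_pos.mpr (by positivity)
    have hcosh : Real.cosh (2 * Real.arsinh u) = 1 + 2*u^2 := by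
      rw [Real.cosh_two_mul, Real.cosh_sq, Real.sinh_arsinh]
      ring
    rw [hcosh, abs_of_pos (by positivity)]
  rw [hCoV2]
  have hgauss : (∫ u in Ioi (0:ℝ), 2 * Real.exp (-x) * Real.exp (-(2*x + 1/2) * u^2))
      = Real.exp (-x) * Real.sqrt (π / (2*x + 1/2)) := by
    rw [MeasureTheory.integral_const_mul, integral_gaussian_Ioi]
    ring
  rw [← hgauss]
  have hb : (0:ℝ) < 2*x + 1/2 := by linarith
  have hsqrtcont : Continuous (fun u : ℝ => Real.sqrt (1 + u^2)) :=
    Real.continuous_sqrt.comp (by continuity)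
  have hsqrtpos : ∀ u : ℝ, (0:ℝ) < Real.sqrt (1 + u^2) :=
    fun u => Real.sqrt_pos.mpr (by positivity)
  have hcont : Continuous (fun u : ℝ => 2 * (Real.sqrt (1+u^2))⁻¹ * Real.exp (-x*(1+2*u^2))) :=
    (continuous_const.mul (hsqrtcont.inv₀ (fun u => (hsqrtpos u).ne'))).mul (by continuity)
  refine setIntegral_mono_on ?_ ?_ measurableSet_Ioi ?_
  · exact ((integrable_exp_neg_mul_sq hb).integrableOn).const_mul _
  · refine Integrable.mono
      (((integrable_exp_neg_mul_sq (show (0:ℝ) < 2*x by linarith)).integrableOn).const_mul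
        (2 * Real.exp (-x))) hcont.aestronglyMeasurable ?_
    refine (ae_restrict_iff' measurableSet_Ioi).2 (Eventually.of_forall fun u _ => ?_)
    have hsq := hsqrtpos u
    have h1 : (Real.sqrt (1 + u^2))⁻¹ ≤ 1 := by
      rw [inv_le_one_iff₀]
      right
      rw [show (1:ℝ) = Real.sqrt 1 from (Real.sqrt_one).symm]
      exact Real.sqrt_le_sqrt (by nlinarith [Real.sqrt_one])
    have hprod : Real.exp (-x * (1 + 2*u^2)) = Real.exp (-x) * Real.exp (-(2*x) * u^2) := by
      rw [← Real.exp_add]; congr 1; ring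
    simp only [Real.norm_eq_abs, abs_mul, Real.abs_exp, abs_inv,
      abs_of_nonneg (Real.sqrt_nonneg _), abs_two]
    calc 2 * (Real.sqrt (1 + u^2))⁻¹ * Real.exp (-x * (1 + 2*u^2))
        ≤ 2 * 1 * Real.exp (-x * (1 + 2*u^2)) := by
          apply mul_le_mul_of_nonneg_right _ (Real.exp_pos _).le
          nlinarith
      _ = 2 * Real.exp (-x) * Real.exp (-(2*x) * u^2) := by rw [hprod]; ring
  · intro u _
    have hsq := hsqrtpos u
    have hsqle : Real.sqrt (1 + u^2) ≤ Real.exp (u^2/2) := by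
      have hexpsq : (Real.exp (u^2/2))^2 = Real.exp (u^2) := by
        rw [sq, ← Real.exp_add]; congr 1; ring
      have h0 : (1 + u^2) ≤ (Real.exp (u^2/2))^2 := by
        rw [hexpsq]; linarith [Real.add_one_le_exp (u^2)]
      calc Real.sqrt (1 + u^2) ≤ Real.sqrt ((Real.exp (u^2/2))^2) := Real.sqrt_le_sqrt h0
        _ = Real.exp (u^2/2) := Real.sqrt_sq (Real.exp_pos _).le
    have hinv : Real.exp (-(u^2/2)) ≤ (Real.sqrt (1 + u^2))⁻¹ := by
      rw [Real.exp_neg]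
      exact inv_anti₀ hsq hsqle
    have hsplit : Real.exp (-x) * Real.exp (-(2*x + 1/2) * u^2)
        = Real.exp (-(u^2/2)) * Real.exp (-x * (1 + 2*u^2)) := by
      rw [← Real.exp_add, ← Real.exp_add]; congr 1; ring
    calc 2 * Real.exp (-x) * Real.exp (-(2*x + 1/2) * u^2)
        = 2 * (Real.exp (-(u^2/2)) * Real.exp (-x * (1 + 2*u^2))) := by rw [mul_assoc, hsplit]
      _ ≤ 2 * ((Real.sqrt (1 + u^2))⁻¹ * Real.exp (-x * (1 + 2*u^2))) := by
          apply mul_le_mul_of_nonneg_left _ (by norm_num)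
          exact mul_le_mul_of_nonneg_right hinv (Real.exp_pos _).le
      _ = 2 * (Real.sqrt (1 + u^2))⁻¹ * Real.exp (-x * (1 + 2*u^2)) := by ring

lemma xlog_le_one {x : ℝ} (hx : 0 < x) (hx1 : x ≤ 1) : x * (1 - Real.log x) ≤ 1 := by
  have h := Real.log_le_sub_one_of_pos (show (0:ℝ) < 1/x by positivity)
  rw [one_div, Real.log_inv] at h
  have h2 : x * (1 - Real.log x) ≤ x * (1/x) := by
    apply mul_le_mul_of_nonneg_left _ hx.le
    rw [one_div]
    linarith
  rw [mul_one_div, div_self hx.ne'] at h2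
  exact h2

lemma log_lower {a c : ℝ} (ha : 0 < a) (h : 1 ≤ a * Real.exp c) : -c ≤ Real.log a := by
  rw [Real.le_log_iff_exp_le ha]
  have h3 : Real.exp (-c) * Real.exp c = 1 := by rw [← Real.exp_add]; simp
  have h4 : Real.exp (-c) * (a * Real.exp c) = a * (Real.exp (-c) * Real.exp c) := by ring
  nlinarith [Real.exp_pos (-c), mul_le_mul_of_nonneg_left h (Real.exp_pos (-c)).le]

lemma branchB {x a b La Fb : ℝ} (hx0 : 0 < x) (hx1 : x < 1)
    (ha0 : 0 < a) (hax : a ≤ x) (hxb : x ≤ b) (hb1 : b ≤ 1)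
    (hLa0 : 0 ≤ La) (hLa : -La ≤ Real.log a)
    (hchoice : Fb = b * (1 + La) ∨ Fb = 1) (hFb1 : Fb ≤ 1)
    (hnum : ((1+La)*(1+b/4))^2 * (2*b+1/2) ≤ 3.14 * (2 - Fb/2)^2) :
    besselK1 x * (x * (1 - Real.log x)) ≤ 2 * besselK0 x := by
  have hla : Real.log a ≤ Real.log x := Real.log_le_log ha0 hax
  obtain ⟨L, hL⟩ : ∃ L : ℝ, L = 1 - Real.log x := ⟨_, rfl⟩
  rw [← hL]
  have hLup : L ≤ 1 + La := by rw [hL]; linarith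
  have hL1 : 1 ≤ L := by
    have : Real.log x < 0 := Real.log_neg hx0 hx1
    rw [hL]; linarith
  have hb0 : 0 < b := lt_of_lt_of_le ha0 (le_trans hax hxb)
  have hFb : x * L ≤ Fb := by
    rcases hchoice with rfl | rfl
    · exact mul_le_mul hxb hLup (by linarith) hb0.le
    · rw [hL]; exact xlog_le_one hx0 hx1.le
  have hden : (0:ℝ) < 2 - Fb/2 := by linarith
  have hD2 := besselK0_lower_sqrt hx0
  have hsm : Real.sqrt (π/(2*b+1/2)) ≤ Real.sqrt (π/(2*x+1/2)) := by
    apply Real.sqrt_le_sqrt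
    rw [div_le_div_iff₀ (by linarith) (by linarith)]
    nlinarith [Real.pi_pos]
  have hq : (1+La)*(1+b/4) ≤ (2 - Fb/2) * Real.sqrt (π/(2*b+1/2)) := by
    have h2 : (1+La)*(1+b/4)/(2-Fb/2) ≤ Real.sqrt (π/(2*b+1/2)) := by
      rw [Real.le_sqrt (by positivity) (by positivity)]
      rw [div_pow, div_le_div_iff₀ (by positivity) (by linarith)]
      nlinarith [Real.pi_gt_d2]
    calc (1+La)*(1+b/4) = ((1+La)*(1+b/4)/(2-Fb/2)) * (2-Fb/2) :=
          (div_mul_cancel₀ _ hden.ne').symm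
      _ ≤ Real.sqrt (π/(2*b+1/2)) * (2-Fb/2) := mul_le_mul_of_nonneg_right h2 hden.le
      _ = (2-Fb/2) * Real.sqrt (π/(2*b+1/2)) := mul_comm _ _
  have hcore : Real.exp (-x) * (L * (1 + x/4)) ≤ 2 * besselK0 x - Fb/2 * besselK0 x := by
    rw [show 2 * besselK0 x - Fb/2 * besselK0 x = (2 - Fb/2) * besselK0 x by ring]
    have h1 : L * (1 + x/4) ≤ (1+La)*(1+b/4) :=
      mul_le_mul hLup (by linarith) (by linarith) (by linarith)
    calc Real.exp (-x) * (L * (1 + x/4))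
        ≤ Real.exp (-x) * ((2-Fb/2) * Real.sqrt (π/(2*b+1/2))) :=
          mul_le_mul_of_nonneg_left (le_trans h1 hq) (Real.exp_pos _).le
      _ ≤ Real.exp (-x) * ((2-Fb/2) * Real.sqrt (π/(2*x+1/2))) := by
          apply mul_le_mul_of_nonneg_left _ (Real.exp_pos _).le
          exact mul_le_mul_of_nonneg_left hsm hden.le
      _ = (2-Fb/2) * (Real.exp (-x) * Real.sqrt (π/(2*x+1/2))) := by ring
      _ ≤ (2-Fb/2) * besselK0 x := mul_le_mul_of_nonneg_left hD2 hden.le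
  have hU2 := besselK1_le_half hx0
  have hxL0 : 0 ≤ x * L := by positivity
  have hK0nn : 0 ≤ besselK0 x := le_trans (by positivity) hD2
  have step : besselK1 x * (x*L) ≤ (besselK0 x/2 + Real.exp (-x)/x + Real.exp (-x)/4) * (x*L) :=
    mul_le_mul_of_nonneg_right hU2 hxL0
  have hexp : (Real.exp (-x)/x + Real.exp (-x)/4) * (x*L) = Real.exp (-x) * (L*(1+x/4)) := by
    field_simp
  have h3 : (besselK0 x/2)*(x*L) ≤ Fb/2 * besselK0 x := by
    rw [show Fb/2 * besselK0 x = (besselK0 x/2)*Fb by ring]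
    exact mul_le_mul_of_nonneg_left hFb (by linarith)
  have step' : besselK1 x * (x*L) ≤ (besselK0 x/2)*(x*L) + Real.exp (-x) * (L*(1+x/4)) := by
    calc besselK1 x * (x*L) ≤ (besselK0 x/2 + Real.exp (-x)/x + Real.exp (-x)/4) * (x*L) := step
      _ = (besselK0 x/2)*(x*L) + (Real.exp (-x)/x + Real.exp (-x)/4) * (x*L) := by ring
      _ = (besselK0 x/2)*(x*L) + Real.exp (-x) * (L*(1+x/4)) := by rw [hexp]
  linarith [step', h3, hcore]

lemma log199 : -(1.615:ℝ) ≤ Real.log 0.199 := by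
  apply log_lower (by norm_num)
  have hs := Real.sum_le_exp_of_nonneg (show (0:ℝ) ≤ 1.615 by norm_num) 10
  norm_num [Finset.sum_range_succ, Nat.factorial] at hs
  rw [show (1.615:ℝ) = 323/200 by norm_num]
  nlinarith [hs]

lemma log26 : -(1.348:ℝ) ≤ Real.log 0.26 := by
  apply log_lower (by norm_num)
  have hs := Real.sum_le_exp_of_nonneg (show (0:ℝ) ≤ 1.348 by norm_num) 8
  norm_num [Finset.sum_range_succ, Nat.factorial] at hs
  rw [show (1.348:ℝ) = 337/250 by norm_num]
  nlinarith [hs]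

lemma log33 : -(1.109:ℝ) ≤ Real.log 0.33 := by
  apply log_lower (by norm_num)
  have hs := Real.sum_le_exp_of_nonneg (show (0:ℝ) ≤ 1.109 by norm_num) 8
  norm_num [Finset.sum_range_succ, Nat.factorial] at hs
  rw [show (1.109:ℝ) = 1109/1000 by norm_num]
  nlinarith [hs]

lemma log41 : -(0.893:ℝ) ≤ Real.log 0.41 := by
  apply log_lower (by norm_num)
  have hs := Real.sum_le_exp_of_nonneg (show (0:ℝ) ≤ 0.893 by norm_num) 7
  norm_num [Finset.sum_range_succ, Nat.factorial] at hs
  rw [show (0.893:ℝ) = 893/1000 by norm_num]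
  nlinarith [hs]

lemma log50 : -(0.694:ℝ) ≤ Real.log 0.5 := by
  apply log_lower (by norm_num)
  have hs := Real.sum_le_exp_of_nonneg (show (0:ℝ) ≤ 0.694 by norm_num) 6
  norm_num [Finset.sum_range_succ, Nat.factorial] at hs
  rw [show (0.694:ℝ) = 347/500 by norm_num]
  nlinarith [hs]

lemma log60 : -(0.512:ℝ) ≤ Real.log 0.6 := by
  apply log_lower (by norm_num)
  have hs := Real.sum_le_exp_of_nonneg (show (0:ℝ) ≤ 0.512 by norm_num) 6
  norm_num [Finset.sum_range_succ, Nat.factorial] at hs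
  rw [show (0.512:ℝ) = 64/125 by norm_num]
  nlinarith [hs]

lemma log72 : -(0.33:ℝ) ≤ Real.log 0.72 := by
  apply log_lower (by norm_num)
  have hs := Real.sum_le_exp_of_nonneg (show (0:ℝ) ≤ 0.33 by norm_num) 5
  norm_num [Finset.sum_range_succ, Nat.factorial] at hs
  rw [show (0.33:ℝ) = 33/100 by norm_num]
  nlinarith [hs]

lemma log85 : -(0.164:ℝ) ≤ Real.log 0.85 := by
  apply log_lower (by norm_num)
  have hs := Real.sum_le_exp_of_nonneg (show (0:ℝ) ≤ 0.164 by norm_num) 4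
  norm_num [Finset.sum_range_succ, Nat.factorial] at hs
  rw [show (0.164:ℝ) = 41/250 by norm_num]
  nlinarith [hs]

lemma log199_upper : Real.log (0.199:ℝ) ≤ 2 * Real.log 2 - 3 := by
  rw [Real.log_le_iff_le_exp (by norm_num)]
  have h2 : (2:ℝ) * Real.log 2 = Real.log 4 := by
    rw [show (4:ℝ) = 2^(2:ℕ) by norm_num, Real.log_pow]
    push_cast; ring
  rw [h2, Real.exp_sub, Real.exp_log (by norm_num : (0:ℝ) < 4)]
  rw [le_div_iff₀ (Real.exp_pos 3)]
  have h3 : Real.exp 3 = Real.exp 1 * Real.exp 1 * Real.exp 1 := by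
    rw [← Real.exp_add, ← Real.exp_add]; norm_num
  nlinarith [Real.exp_one_lt_d9, Real.exp_pos 1, Real.exp_one_gt_d9]

theorem besselK1_div_besselK0_bound (x : ℝ) (hx0 : 0 < x) (hx1 : x < 1) :
    besselK1 x / besselK0 x ≤ 2 / (x * Real.log (Real.exp 1 / x)) := by
  have hlog : Real.log (Real.exp 1 / x) = 1 - Real.log x := by
    rw [Real.log_div (Real.exp_ne_zero 1) hx0.ne', Real.log_exp]
  have hlx : Real.log x < 0 := Real.log_neg hx0 hx1
  have hxL : 0 < x * (1 - Real.log x) := by nlinarith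
  have hK0pos : 0 < besselK0 x :=
    lt_of_lt_of_le (mul_pos (Real.exp_pos _)
      (Real.sqrt_pos.mpr (div_pos Real.pi_pos (by linarith)))) (besselK0_lower_sqrt hx0)
  rw [hlog, div_le_div_iff₀ hK0pos hxL]
  rcases le_or_gt x 0.199 with hc0 | hc0
  · -- branch A
    have hK1 := besselK1_le_inv hx0
    have hlogb : Real.log x ≤ Real.log 0.199 := Real.log_le_log hx0 hc0
    have hD1 := besselK0_lower_log hx0 hx1
    rw [Real.log_div two_ne_zero hx0.ne'] at hD1
    have hK0half : 1 - Real.log x ≤ 2 * besselK0 x := by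
      nlinarith [log199_upper, Real.log_two_gt_d9, sq_nonneg x]
    calc besselK1 x * (x*(1 - Real.log x)) ≤ (1/x) * (x*(1 - Real.log x)) :=
          mul_le_mul_of_nonneg_right hK1 hxL.le
      _ = 1 - Real.log x := by field_simp
      _ ≤ 2 * besselK0 x := hK0half
  · rcases le_or_gt x 0.26 with hc | hc
    · exact branchB hx0 hx1 (by norm_num) hc0.le hc (by norm_num) (by norm_num) log199
        (Or.inl rfl) (by norm_num) (by norm_num)
    rcases le_or_gt x 0.33 with hc' | hc'
    · exact branchB hx0 hx1 (by norm_num) hc.le hc' (by norm_num) (by norm_num) log26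
        (Or.inl rfl) (by norm_num) (by norm_num)
    rcases le_or_gt x 0.41 with hc'' | hc''
    · exact branchB hx0 hx1 (by norm_num) hc'.le hc'' (by norm_num) (by norm_num) log33
        (Or.inl rfl) (by norm_num) (by norm_num)
    rcases le_or_gt x 0.5 with hc3 | hc3
    · exact branchB hx0 hx1 (by norm_num) hc''.le hc3 (by norm_num) (by norm_num) log41
        (Or.inl rfl) (by norm_num) (by norm_num)
    rcases le_or_gt x 0.6 with hc4 | hc4
    · exact branchB hx0 hx1 (by norm_num) hc3.le hc4 (by norm_num) (by norm_num) log50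
        (Or.inr rfl) (by norm_num) (by norm_num)
    rcases le_or_gt x 0.72 with hc5 | hc5
    · exact branchB hx0 hx1 (by norm_num) hc4.le hc5 (by norm_num) (by norm_num) log60
        (Or.inr rfl) (by norm_num) (by norm_num)
    rcases le_or_gt x 0.85 with hc6 | hc6
    · exact branchB hx0 hx1 (by norm_num) hc5.le hc6 (by norm_num) (by norm_num) log72
        (Or.inr rfl) (by norm_num) (by norm_num)
    · exact branchB hx0 hx1 (by norm_num) hc6.le hx1.le (by norm_num) (by norm_num) log85
        (Or.inr rfl) (by norm_num) (by norm_num)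
end

section
/- For all t ≥ 1, K₁(t) ≤ 2 K₀(t), where K₀(t) = ∫_0^∞ e^{−t cosh τ} dτ and K₁(t) = ∫_0^∞ e^{−t cosh τ} cosh τ dτ. -/
open Real MeasureTheory

open Set Filter

private lemma cosh07_le : Real.cosh 0.7 ≤ 1.256 := by
  rw [Real.cosh_eq]
  have h1 : |(0.7:ℝ)| ≤ 1 := by rw [abs_of_pos] <;> norm_num
  have h2 : |(-0.7:ℝ)| ≤ 1 := by rw [abs_of_neg] <;> norm_num
  have b1 := Real.exp_bound h1 (n := 6) (by norm_num)
  have b2 := Real.exp_bound h2 (n := 6) (by norm_num)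
  rw [abs_sub_le_iff] at b1 b2
  have e1 := b1.1
  have e2 := b2.1
  simp only [Finset.sum_range_succ, Finset.sum_range_zero, Nat.factorial,
    Nat.succ_eq_add_one] at e1 e2
  rw [abs_of_pos (by norm_num : (0.7:ℝ) > 0)] at e1
  rw [abs_of_neg (by norm_num : (-0.7:ℝ) < 0)] at e2
  norm_num at e1 e2 ⊢
  nlinarith [e1, e2]

private lemma exp_lb744 : (1.186:ℝ)^4 ≤ Real.exp 0.744 := by
  have h := Real.add_one_le_exp (0.186:ℝ)
  have h2 : ((1.186:ℝ))^4 ≤ (Real.exp 0.186)^4 :=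
    pow_le_pow_left₀ (by norm_num) (by linarith) 4
  calc (1.186:ℝ)^4 ≤ (Real.exp 0.186)^4 := h2
    _ = Real.exp ((4:ℕ) * 0.186) := by rw [Real.exp_nat_mul]
    _ = Real.exp 0.744 := by norm_num

private lemma self_le_cosh' {x : ℝ} (hx : 0 ≤ x) : x ≤ Real.cosh x := by
  rcases eq_or_lt_of_le hx with rfl | h
  · simpa using Real.one_le_cosh 0
  · exact le_of_lt (lt_trans (Real.self_lt_sinh_iff.mpr h) (Real.sinh_lt_cosh x))

private lemma hasDerivF {t : ℝ} (ht : 1 ≤ t) (x : ℝ) :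
    HasDerivAt (fun τ => -Real.exp (-t * Real.cosh τ) / t)
      (Real.sinh x * Real.exp (-t * Real.cosh x)) x := by
  have ht0 : t ≠ 0 := by linarith
  have h1 : HasDerivAt (fun τ => -t * Real.cosh τ) (-t * Real.sinh x) x :=
    (Real.hasDerivAt_cosh x).const_mul (-t)
  have h3 := (h1.exp.neg).div_const t
  refine HasDerivAt.congr_deriv h3 ?_
  field_simp

private lemma tendstoF {t : ℝ} (ht : 1 ≤ t) :
    Tendsto (fun τ => -Real.exp (-t * Real.cosh τ) / t) atTop (nhds 0) := by
  have hcosh : Tendsto Real.cosh atTop atTop := by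
    apply tendsto_atTop_mono' atTop _ tendsto_id
    filter_upwards [eventually_ge_atTop (0:ℝ)] with x hx
    exact self_le_cosh' hx
  have h1 : Tendsto (fun τ => -t * Real.cosh τ) atTop atBot :=
    (tendsto_const_mul_atBot_of_neg (by linarith)).mpr hcosh
  have h2 : Tendsto (fun τ => Real.exp (-t * Real.cosh τ)) atTop (nhds 0) :=
    Real.tendsto_exp_atBot.comp h1
  simpa using (h2.neg).div_const t

private lemma tail_integrable {t : ℝ} (ht : 1 ≤ t) {a : ℝ} (ha : 0 ≤ a) :
    IntegrableOn (fun τ => Real.sinh τ * Real.exp (-t * Real.cosh τ)) (Set.Ioi a) := by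
  apply integrableOn_Ioi_deriv_of_nonneg
    ((hasDerivF ht a).continuousAt.continuousWithinAt)
    (fun x _ => hasDerivF ht x)
    (fun x hx => mul_nonneg (Real.sinh_nonneg_iff.mpr (le_of_lt (lt_of_le_of_lt ha hx)))
      (Real.exp_pos _).le)
    (tendstoF ht)

private lemma tail_integral {t : ℝ} (ht : 1 ≤ t) {a : ℝ} (ha : 0 ≤ a) :
    ∫ τ in Set.Ioi a, Real.sinh τ * Real.exp (-t * Real.cosh τ)
      = Real.exp (-t * Real.cosh a) / t := by
  rw [integral_Ioi_of_hasDerivAt_of_tendsto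
    ((hasDerivF ht a).continuousAt.continuousWithinAt)
    (fun x _ => hasDerivF ht x) (tail_integrable ht ha) (tendstoF ht)]
  ring

private lemma f_integrable {t : ℝ} (ht : 1 ≤ t) :
    IntegrableOn (fun τ => Real.exp (-t * Real.cosh τ)) (Set.Ioi (0:ℝ)) := by
  apply Integrable.mono' (exp_neg_integrableOn_Ioi 0 (by norm_num : (0:ℝ) < 1))
    ((Real.continuous_exp.comp ((continuous_const.mul Real.continuous_cosh))).aestronglyMeasurable)
  filter_upwards [ae_restrict_mem measurableSet_Ioi] with x hx
  simp only [Function.comp_apply, Pi.mul_apply]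
  rw [Real.norm_eq_abs, abs_of_pos (Real.exp_pos _)]
  apply Real.exp_le_exp.mpr
  have h1 : (x:ℝ) ≤ Real.cosh x := self_le_cosh' (le_of_lt hx)
  have h2 : Real.cosh x ≤ t * Real.cosh x := by nlinarith [Real.one_le_cosh x]
  linarith

private lemma fcosh_integrable {t : ℝ} (ht : 1 ≤ t) :
    IntegrableOn (fun τ => Real.exp (-t * Real.cosh τ) * Real.cosh τ) (Set.Ioi (0:ℝ)) := by
  apply Integrable.mono' ((tail_integrable ht le_rfl).add (f_integrable ht))
    (((Real.continuous_exp.comp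
      (continuous_const.mul Real.continuous_cosh)).mul Real.continuous_cosh).aestronglyMeasurable)
  filter_upwards [ae_restrict_mem measurableSet_Ioi] with x hx
  simp only [Function.comp_apply, Pi.add_apply, Pi.mul_apply]
  rw [Real.norm_eq_abs, abs_of_pos (mul_pos (Real.exp_pos _) (by positivity))]
  have h1 : Real.cosh x ≤ Real.sinh x + 1 := by
    have := Real.cosh_eq x
    have := Real.sinh_eq x
    have h3 : Real.exp (-x) ≤ 1 := Real.exp_le_one_iff.mpr (by linarith [hx.out])
    nlinarith
  have h2 := (Real.exp_pos (-t * Real.cosh x)).le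
  nlinarith

theorem besselK1_le_two_besselK0' (t : ℝ) (ht : 1 ≤ t) :
    (∫ τ in Set.Ioi (0:ℝ), Real.exp (-t * Real.cosh τ) * Real.cosh τ)
      ≤ 2 * ∫ τ in Set.Ioi (0:ℝ), Real.exp (-t * Real.cosh τ) := by
  have ht0 : (0:ℝ) < t := by linarith
  set b := Real.log (2 + Real.sqrt 3) with hbdef
  have hsqrt3 : (1.7:ℝ) ≤ Real.sqrt 3 := by
    nlinarith [Real.sq_sqrt (by norm_num : (0:ℝ) ≤ 3), Real.sqrt_nonneg 3]
  have hpos : (0:ℝ) < 2 + Real.sqrt 3 := by linarith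
  have hexpb : Real.exp b = 2 + Real.sqrt 3 := Real.exp_log hpos
  have hcoshb : Real.cosh b = 2 := by
    rw [Real.cosh_eq, Real.exp_neg, hexpb]
    have h3 : Real.sqrt 3 ^ 2 = 3 := Real.sq_sqrt (by norm_num)
    rw [inv_eq_one_div]
    field_simp
    nlinarith
  have hb1 : (1:ℝ) ≤ b := by
    rw [hbdef, Real.le_log_iff_exp_le hpos]
    have := Real.exp_one_lt_d9
    linarith
  have hab : (0.7:ℝ) ≤ b := by linarith
  have hb0 : (0:ℝ) ≤ b := by linarith
  have hc : Real.cosh 0.7 ≤ 1.256 := cosh07_le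
  have hc1 : (1:ℝ) ≤ Real.cosh 0.7 := Real.one_le_cosh 0.7
  set h : ℝ → ℝ := fun τ => Real.exp (-t * Real.cosh τ) * (Real.cosh τ - 2) with hhdef
  have hcont : Continuous h := by
    apply Continuous.mul
    · exact Real.continuous_exp.comp (continuous_const.mul Real.continuous_cosh)
    · exact Real.continuous_cosh.sub continuous_const
  -- integrability on pieces
  have hI1 : IntegrableOn h (Set.Ioc (0:ℝ) 0.7) := hcont.integrableOn_Ioc
  have hI2 : IntegrableOn h (Set.Ioc (0.7:ℝ) b) := hcont.integrableOn_Ioc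
  have hI3 : IntegrableOn h (Set.Ioi b) := by
    apply Integrable.mono' ((tail_integrable ht hb0))
      hcont.aestronglyMeasurable
    filter_upwards [ae_restrict_mem measurableSet_Ioi] with x hx
    have hx1 : (1:ℝ) ≤ x := le_of_lt (lt_of_le_of_lt hb1 hx)
    have hcx : (2:ℝ) ≤ Real.cosh x := by
      rw [← hcoshb]
      apply Real.cosh_le_cosh.mpr
      rw [abs_of_nonneg hb0, abs_of_nonneg (by linarith : (0:ℝ) ≤ x)]
      exact le_of_lt hx
    have hsinh : Real.cosh x - 2 ≤ Real.sinh x := by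
      have := Real.cosh_eq x
      have := Real.sinh_eq x
      have h3 : Real.exp (-x) ≤ 1 := Real.exp_le_one_iff.mpr (by linarith)
      nlinarith
    rw [Real.norm_eq_abs, hhdef]
    rw [abs_of_nonneg (by nlinarith [(Real.exp_pos (-t * Real.cosh x)).le] :
      (0:ℝ) ≤ Real.exp (-t * Real.cosh x) * (Real.cosh x - 2))]
    have := (Real.exp_pos (-t * Real.cosh x)).le
    nlinarith
  have hIb : IntegrableOn h (Set.Ioc (0:ℝ) b) := by
    rw [← Set.Ioc_union_Ioc_eq_Ioc (by norm_num : (0:ℝ) ≤ 0.7) hab]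
    exact hI1.union hI2
  -- splitting
  have hd1 : Disjoint (Set.Ioc (0:ℝ) b) (Set.Ioi b) :=
    Set.disjoint_left.mpr fun x h1 h2 => absurd h1.2 (not_le.mpr h2)
  have hd2 : Disjoint (Set.Ioc (0:ℝ) 0.7) (Set.Ioc (0.7:ℝ) b) :=
    Set.disjoint_left.mpr fun x h1 h2 => absurd h1.2 (not_le.mpr h2.1)
  have hsplit : ∫ τ in Set.Ioi (0:ℝ), h τ
      = ((∫ τ in Set.Ioc (0:ℝ) 0.7, h τ) + ∫ τ in Set.Ioc (0.7:ℝ) b, h τ)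
        + ∫ τ in Set.Ioi b, h τ := by
    rw [← setIntegral_union hd2 measurableSet_Ioc hI1 hI2,
      Set.Ioc_union_Ioc_eq_Ioc (by norm_num : (0:ℝ) ≤ 0.7) hab,
      ← setIntegral_union hd1 measurableSet_Ioi hIb hI3,
      Set.Ioc_union_Ioi_eq_Ioi hb0]
  -- piece 1
  have hB1 : ∫ τ in Set.Ioc (0:ℝ) 0.7, h τ
      ≤ 0.7 * ((Real.cosh 0.7 - 2) * Real.exp (-t * Real.cosh 0.7)) := by
    have hmono : ∫ τ in Set.Ioc (0:ℝ) 0.7, h τ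
        ≤ ∫ _ in Set.Ioc (0:ℝ) 0.7, ((Real.cosh 0.7 - 2) * Real.exp (-t * Real.cosh 0.7)) := by
      apply setIntegral_mono_on hI1
        (integrableOn_const (by rw [Real.volume_Ioc]; exact ENNReal.ofReal_ne_top))
        measurableSet_Ioc
      intro x hx
      have hcx : Real.cosh x ≤ Real.cosh 0.7 := by
        apply Real.cosh_le_cosh.mpr
        rw [abs_of_pos hx.1, abs_of_pos (by norm_num : (0:ℝ) < 0.7)]
        exact hx.2
      have hfx : Real.exp (-t * Real.cosh 0.7) ≤ Real.exp (-t * Real.cosh x) :=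
        Real.exp_le_exp.mpr (by nlinarith)
      have he1 := (Real.exp_pos (-t * Real.cosh x)).le
      have he2 := (Real.exp_pos (-t * Real.cosh 0.7)).le
      rw [hhdef]
      nlinarith
    rw [setIntegral_const, Real.volume_real_Ioc, max_eq_left (by norm_num : (0:ℝ) ≤ 0.7 - 0), smul_eq_mul]
      at hmono
    calc ∫ τ in Set.Ioc (0:ℝ) 0.7, h τ ≤ _ := hmono
      _ = 0.7 * ((Real.cosh 0.7 - 2) * Real.exp (-t * Real.cosh 0.7)) := by norm_num
  -- piece 2
  have hB2 : ∫ τ in Set.Ioc (0.7:ℝ) b, h τ ≤ 0 := by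
    have : ∫ τ in Set.Ioc (0.7:ℝ) b, h τ ≤ ∫ _ in Set.Ioc (0.7:ℝ) b, (0:ℝ) := by
      apply setIntegral_mono_on hI2 (integrable_zero _ _ _) measurableSet_Ioc
      intro x hx
      have hcx : Real.cosh x ≤ 2 := by
        rw [← hcoshb]
        apply Real.cosh_le_cosh.mpr
        rw [abs_of_pos (by linarith [hx.1] : (0:ℝ) < x), abs_of_nonneg hb0]
        exact hx.2
      have := (Real.exp_pos (-t * Real.cosh x)).le
      simp only [hhdef, Pi.zero_apply]
      nlinarith
    simpa using this
  -- piece 3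
  have hB3 : ∫ τ in Set.Ioi b, h τ ≤ Real.exp (-t * 2) / t := by
    have hmono : ∫ τ in Set.Ioi b, h τ
        ≤ ∫ τ in Set.Ioi b, Real.sinh τ * Real.exp (-t * Real.cosh τ) := by
      apply setIntegral_mono_on hI3 (tail_integrable ht hb0) measurableSet_Ioi
      intro x hx
      have hsinh : Real.cosh x - 2 ≤ Real.sinh x := by
        have := Real.cosh_eq x
        have := Real.sinh_eq x
        have h3 : Real.exp (-x) ≤ 1 := Real.exp_le_one_iff.mpr (by linarith [hx.out])
        nlinarith
      have := (Real.exp_pos (-t * Real.cosh x)).le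
      simp only [hhdef]
      nlinarith
    rw [tail_integral ht hb0, hcoshb] at hmono
    exact hmono
  -- numeric conclusion
  have hnum : 0.7 * ((Real.cosh 0.7 - 2) * Real.exp (-t * Real.cosh 0.7))
      + Real.exp (-t * 2) / t ≤ 0 := by
    set c := Real.cosh 0.7
    have hs1 : (0.744:ℝ) ≤ 2 - c := by linarith
    have hexpsplit : Real.exp (-t * 2) = Real.exp (-t * c) * Real.exp (-(t * (2 - c))) := by
      rw [← Real.exp_add]; ring_nf
    have hkey : Real.exp (-(t * (2 - c))) / t ≤ 0.7 * (2 - c) := by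
      have h1 : Real.exp (-(t * (2 - c))) ≤ Real.exp (-0.744) :=
        Real.exp_le_exp.mpr (by nlinarith)
      have h2 : Real.exp (-0.744) ≤ 0.5208 := by
        rw [Real.exp_neg]
        have h4 : (0.5208:ℝ)⁻¹ ≤ Real.exp 0.744 := le_trans (by norm_num) exp_lb744
        calc (Real.exp 0.744)⁻¹ ≤ ((0.5208:ℝ)⁻¹)⁻¹ :=
              inv_anti₀ (by norm_num) h4
          _ = 0.5208 := by norm_num
      have h3 : Real.exp (-(t * (2 - c))) / t ≤ Real.exp (-(t * (2 - c))) :=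
        div_le_self (Real.exp_pos _).le ht
      linarith
    rw [hexpsplit]
    have hepos := (Real.exp_pos (-t * c)).le
    have : Real.exp (-t * c) * Real.exp (-(t * (2 - c))) / t
        = Real.exp (-t * c) * (Real.exp (-(t * (2 - c))) / t) := by ring
    rw [this]
    have hfin : Real.exp (-t * c) * (Real.exp (-(t * (2 - c))) / t)
        ≤ Real.exp (-t * c) * (0.7 * (2 - c)) := mul_le_mul_of_nonneg_left hkey hepos
    have hring : 0.7 * ((c - 2) * Real.exp (-t * c))
        = -(Real.exp (-t * c) * (0.7 * (2 - c))) := by ring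
    linarith
  -- put everything together
  have hIle : ∫ τ in Set.Ioi (0:ℝ), h τ ≤ 0 := by
    rw [hsplit]; linarith
  have hintsub : ∫ τ in Set.Ioi (0:ℝ), h τ
      = (∫ τ in Set.Ioi (0:ℝ), Real.exp (-t * Real.cosh τ) * Real.cosh τ)
        - 2 * ∫ τ in Set.Ioi (0:ℝ), Real.exp (-t * Real.cosh τ) := by
    rw [← MeasureTheory.integral_const_mul,
      ← MeasureTheory.integral_sub (fcosh_integrable ht) ((f_integrable ht).const_mul 2)]
    apply setIntegral_congr_fun measurableSet_Ioi
    intro x _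
    simp only [hhdef]
    ring
  linarith [hintsub ▸ hIle]


theorem besselK1_le_two_besselK0 (t : ℝ) (ht : 1 ≤ t) : besselK1 t ≤ 2 * besselK0 t := by
  unfold besselK1 besselK0
  exact besselK1_le_two_besselK0' t ht
end
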